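/- Let F̄₅ be an algebraic closure of 𝔽₅ = ℤ/5ℤ, fix ζ ∈ F̄₅ of multiplicative order 8 with ζ² = 2, let r ≥ 1 be an integer, and fix u ∈ F̄₅^× of multiplicative order 2^r. Inside GL₂(F̄₅), let Z be the subgroup generated by the scalar matrix u·I, let G₂ be the subgroup generated by the image of SL₂(𝔽₅) and the matrix j := [[0, ζ], [−ζ⁻¹, 0]], and let G̃ᵣ be the subgroup generated by Z and G₂. Suppose α : Z → ℂ^× is a group homomorphism with α((u·I)^{2^{r−1}}) = 1 (i.e. α is trivial on the scalar matrix −I ∈ Z) and β : G₂ → ℂ^× is a group homomorphism with β(−I) = 1. Then there exists a unique group homomorphism χ : G̃ᵣ → ℂ^× whose restriction to Z is α and whose restriction to G₂ is β. -/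

import Mathlib

open Matrix Pointwise

/-- Lemma 4.1 of the paper: in `GL₂(F̄₅)`, with `Z` generated by the scalar matrix
`u·I` (`u` of order `2^r`) and `G₂` generated by the image of `SL₂(𝔽₅)` and
`j = [[0, ζ], [-ζ⁻¹, 0]]` (`ζ` of order `8`, `ζ² = 2`), any character `α` of `Z`
trivial on `(u·I)^{2^{r-1}} = -I` and any character `β` of `G₂` trivial on `-I` glue to
a unique character `χ` of the subgroup generated by `Z` and `G₂`. -/
theorem glue_characters_on_central_extension
    (F : Type) [Field F] [Algebra (ZMod 5) F] [IsAlgClosed F] [Algebra.IsAlgebraic (ZMod 5) F]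
    (ζ : F) (hζ8 : orderOf ζ = 8) (hζ2 : ζ ^ 2 = 2)
    (r : ℕ) (hr : 1 ≤ r) (u : F) (hu : orderOf u = 2 ^ r)
    (s j : Matrix.GeneralLinearGroup (Fin 2) F)
    (hs : (s : Matrix (Fin 2) (Fin 2) F) = u • (1 : Matrix (Fin 2) (Fin 2) F))
    (hj : (j : Matrix (Fin 2) (Fin 2) F) = !![0, ζ; -ζ⁻¹, 0])
    (Z : Subgroup (Matrix.GeneralLinearGroup (Fin 2) F)) (hZ : Z = Subgroup.closure {s})
    (G₂ : Subgroup (Matrix.GeneralLinearGroup (Fin 2) F))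
    (hG₂ : G₂ = Subgroup.closure
      (Set.range (Matrix.SpecialLinearGroup.toGL.comp
        (Matrix.SpecialLinearGroup.map (algebraMap (ZMod 5) F))) ∪ {j}))
    (α : Z →* ℂˣ)
    (hα : ∀ z : Z, (z : Matrix.GeneralLinearGroup (Fin 2) F) = s ^ 2 ^ (r - 1) → α z = 1)
    (β : G₂ →* ℂˣ)
    (hβ : ∀ g : G₂, (g : Matrix.GeneralLinearGroup (Fin 2) F) = -1 → β g = 1) :
    ∃! χ : (Z ⊔ G₂ : Subgroup (Matrix.GeneralLinearGroup (Fin 2) F)) →* ℂˣ,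
      χ.comp (Subgroup.inclusion le_sup_left) = α ∧
      χ.comp (Subgroup.inclusion le_sup_right) = β := by
  have hζ0 : ζ ≠ 0 := by
    intro h
    have h1 := pow_orderOf_eq_one ζ
    rw [hζ8, h] at h1
    simp at h1
  have hu0 : u ≠ 0 := by
    intro h
    have h1 := pow_orderOf_eq_one u
    rw [hu, h, zero_pow (by positivity)] at h1
    exact zero_ne_one h1
  -- `s` is central
  have hscen : s ∈ Subgroup.center (Matrix.GeneralLinearGroup (Fin 2) F) := by
    rw [Subgroup.mem_center_iff]
    intro g
    ext
    simp only [Units.val_mul, hs, smul_mul_assoc, mul_smul_comm, one_mul, mul_one]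
  have hZle : Z ≤ Subgroup.center (Matrix.GeneralLinearGroup (Fin 2) F) := by
    rw [hZ, Subgroup.closure_le]
    simpa using hscen
  have hcomm : ∀ z ∈ Z, ∀ g : Matrix.GeneralLinearGroup (Fin 2) F, z * g = g * z :=
    fun z hz g => (Subgroup.mem_center_iff.1 (hZle hz) g).symm
  have hZnormal : Z.Normal := by
    constructor
    intro n hn g
    rw [← hcomm n hn g, mul_assoc, mul_inv_cancel, mul_one]
    exact hn
  -- every element of G₂ has determinant 1
  have hdet : ∀ g ∈ G₂, Matrix.det ((g : Matrix.GeneralLinearGroup (Fin 2) F) :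
      Matrix (Fin 2) (Fin 2) F) = 1 := by
    intro g hg
    rw [hG₂] at hg
    induction hg using Subgroup.closure_induction with
    | mem x hx =>
      rcases hx with hx | hx
      · obtain ⟨A, rfl⟩ := hx
        exact (Matrix.SpecialLinearGroup.map (algebraMap (ZMod 5) F) A).prop
      · rw [Set.mem_singleton_iff] at hx
        subst hx
        rw [hj, Matrix.det_fin_two_of]
        field_simp
        norm_num
    | one => simp
    | mul a b _ _ ha hb => rw [Units.val_mul, Matrix.det_mul, ha, hb, one_mul]
    | inv a _ ha =>
      have h1 : Matrix.det (((a⁻¹ : Matrix.GeneralLinearGroup (Fin 2) F) :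
          Matrix (Fin 2) (Fin 2) F) * ((a : Matrix.GeneralLinearGroup (Fin 2) F) :
          Matrix (Fin 2) (Fin 2) F)) = 1 := by
        rw [← Units.val_mul, inv_mul_cancel]; simp
      rwa [Matrix.det_mul, ha, mul_one] at h1
  -- every element of Z is a nonzero scalar matrix
  have hZscalar : ∀ z ∈ Z, ∃ v : F, v ≠ 0 ∧
      ((z : Matrix.GeneralLinearGroup (Fin 2) F) : Matrix (Fin 2) (Fin 2) F) =
        v • (1 : Matrix (Fin 2) (Fin 2) F) := by
    intro z hz
    rw [hZ] at hz
    induction hz using Subgroup.closure_induction with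
    | mem x hx =>
      rw [Set.mem_singleton_iff] at hx
      subst hx
      exact ⟨u, hu0, hs⟩
    | one => exact ⟨1, one_ne_zero, by simp⟩
    | mul a b _ _ ha hb =>
      obtain ⟨v, hv0, hv⟩ := ha
      obtain ⟨w, hw0, hw⟩ := hb
      refine ⟨v * w, mul_ne_zero hv0 hw0, ?_⟩
      rw [Units.val_mul, hv, hw, smul_mul_assoc, one_mul, smul_smul]
    | inv a _ ha =>
      obtain ⟨v, hv0, hv⟩ := ha
      refine ⟨v⁻¹, inv_ne_zero hv0, ?_⟩
      have h1 : (a : Matrix (Fin 2) (Fin 2) F) * (v⁻¹ • (1 : Matrix (Fin 2) (Fin 2) F)) = 1 := by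
        rw [hv, smul_mul_assoc, one_mul, smul_smul, mul_inv_cancel₀ hv0, one_smul]
      exact Units.inv_eq_of_mul_eq_one_right h1
  -- elements of Z of determinant one are ±1
  have hkey : ∀ z ∈ Z, Matrix.det ((z : Matrix.GeneralLinearGroup (Fin 2) F) :
      Matrix (Fin 2) (Fin 2) F) = 1 → z = 1 ∨ z = -1 := by
    intro z hz hdz
    obtain ⟨v, hv0, hv⟩ := hZscalar z hz
    rw [hv, Matrix.det_smul, Matrix.det_one, mul_one, Fintype.card_fin] at hdz
    have hsq : v * v = 1 := by rw [← pow_two]; exact hdz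
    rcases mul_self_eq_one_iff.1 hsq with h | h
    · left
      exact Units.ext (by rw [hv, h, one_smul, Units.val_one])
    · right
      exact Units.ext (by rw [hv, h, neg_smul, one_smul, Units.val_neg, Units.val_one])
  -- s ^ 2 ^ (r - 1) = -1
  have hupow : u ^ 2 ^ (r - 1) = -1 := by
    have h2r : 2 ^ (r - 1) + 2 ^ (r - 1) = 2 ^ r := by
      rw [← two_mul, ← pow_succ']
      congr 1
      omega
    have h1 : u ^ 2 ^ (r - 1) * u ^ 2 ^ (r - 1) = 1 := by
      rw [← pow_add, h2r, ← hu, pow_orderOf_eq_one]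
    rcases mul_self_eq_one_iff.1 h1 with h | h
    · exfalso
      have hd := orderOf_dvd_of_pow_eq_one h
      rw [hu] at hd
      have := Nat.le_of_dvd (by positivity) hd
      have h2 : 2 ^ (r - 1) < 2 ^ r := Nat.pow_lt_pow_right one_lt_two (by omega)
      omega
    · exact h
  have hsneg : s ^ 2 ^ (r - 1) = (-1 : Matrix.GeneralLinearGroup (Fin 2) F) := by
    refine Units.ext ?_
    rw [Units.val_pow_eq_pow_val, hs, smul_pow, one_pow, hupow, neg_smul, one_smul,
      Units.val_neg, Units.val_one]
  -- the multiplication homomorphism onto Z ⊔ G₂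
  let f : Z × G₂ →* (Z ⊔ G₂ : Subgroup (Matrix.GeneralLinearGroup (Fin 2) F)) :=
    { toFun := fun p => ⟨(p.1 : Matrix.GeneralLinearGroup (Fin 2) F) * p.2,
        mul_mem (Subgroup.mem_sup_left p.1.2) (Subgroup.mem_sup_right p.2.2)⟩
      map_one' := by
        ext
        simp
      map_mul' := fun p q => by
        ext
        have h := hcomm (q.1 : Matrix.GeneralLinearGroup (Fin 2) F) q.1.2
          (p.2 : Matrix.GeneralLinearGroup (Fin 2) F)
        simp only [Prod.fst_mul, Prod.snd_mul, Subgroup.coe_mul, Submonoid.coe_mul]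
        rw [mul_assoc, ← mul_assoc ((q.1 : Matrix.GeneralLinearGroup (Fin 2) F)), h,
          mul_assoc, mul_assoc] }
    -- f is surjective
  have hf_surj : Function.Surjective f := by
    rintro ⟨x, hx⟩
    have hx' : x ∈ (↑Z * ↑G₂ : Set (Matrix.GeneralLinearGroup (Fin 2) F)) := by
      rw [← Subgroup.normal_mul]
      exact hx
    obtain ⟨z, hz, g, hg, h⟩ := hx'
    exact ⟨(⟨z, hz⟩, ⟨g, hg⟩), Subtype.ext h⟩
  -- the glued character on the product
  let φ : Z × G₂ →* ℂˣ := (α.comp (MonoidHom.fst Z G₂)) * (β.comp (MonoidHom.snd Z G₂))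
  have hφ : ∀ p : Z × G₂, φ p = α p.1 * β p.2 := fun p => rfl
  have hker : f.ker ≤ φ.ker := by
    rintro ⟨z, g⟩ hzg
    have h0 : f (z, g) = 1 := hzg
    have h1 : (z : Matrix.GeneralLinearGroup (Fin 2) F) * g = 1 := by
      have := congrArg (Subtype.val) h0
      simpa [f] using this
    have hdg : Matrix.det ((g : Matrix.GeneralLinearGroup (Fin 2) F) :
        Matrix (Fin 2) (Fin 2) F) = 1 := hdet _ g.2
    have hdz : Matrix.det ((z : Matrix.GeneralLinearGroup (Fin 2) F) :
        Matrix (Fin 2) (Fin 2) F) = 1 := by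
      have h2 : Matrix.det (((z : Matrix.GeneralLinearGroup (Fin 2) F) * g :
          Matrix.GeneralLinearGroup (Fin 2) F) : Matrix (Fin 2) (Fin 2) F) = 1 := by
        rw [h1]; simp
      rw [Units.val_mul, Matrix.det_mul, hdg, mul_one] at h2
      exact h2
    have hmem : φ (z, g) = 1 := by
      rcases hkey _ z.2 hdz with h | h
      · have hz1 : z = 1 := Subtype.ext (by simp [h])
        have hg1 : (g : Matrix.GeneralLinearGroup (Fin 2) F) = 1 := by
          rwa [h, one_mul] at h1
        have hg1' : g = 1 := Subtype.ext (by simp [hg1])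
        rw [hφ, hz1, hg1', _root_.map_one, _root_.map_one, mul_one]
      · have hαz : α z = 1 := hα z (h.trans hsneg.symm)
        have hg1 : (g : Matrix.GeneralLinearGroup (Fin 2) F) = -1 := by
          rw [h] at h1
          have h2 : (g : Matrix.GeneralLinearGroup (Fin 2) F) =
              (-1 : Matrix.GeneralLinearGroup (Fin 2) F)⁻¹ := eq_inv_of_mul_eq_one_right h1
          rw [h2, inv_neg_one]
        rw [hφ, hαz, hβ g hg1, mul_one]
    exact hmem
  -- the glued character
  let f_inv := Function.surjInv hf_surj
  have hfinv : Function.RightInverse f_inv f := Function.rightInverse_surjInv hf_surj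
  let χ : (Z ⊔ G₂ : Subgroup (Matrix.GeneralLinearGroup (Fin 2) F)) →* ℂˣ :=
    f.liftOfRightInverse f_inv hfinv ⟨φ, hker⟩
  have hχ : ∀ p : Z × G₂, χ (f p) = φ p := fun p =>
    f.liftOfRightInverse_comp_apply f_inv hfinv ⟨φ, hker⟩ p
  have hZres : χ.comp (Subgroup.inclusion le_sup_left) = α := by
    ext z
    have h1 : (Subgroup.inclusion (le_sup_left : Z ≤ Z ⊔ G₂) z) = f (z, 1) := by
      apply Subtype.ext
      simp [f]
    rw [MonoidHom.comp_apply, h1, hχ, hφ, _root_.map_one, mul_one]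
  have hGres : χ.comp (Subgroup.inclusion le_sup_right) = β := by
    ext g
    have h1 : (Subgroup.inclusion (le_sup_right : G₂ ≤ Z ⊔ G₂) g) = f (1, g) := by
      apply Subtype.ext
      simp [f]
    rw [MonoidHom.comp_apply, h1, hχ, hφ, _root_.map_one, one_mul]
  refine ⟨χ, ⟨hZres, hGres⟩, ?_⟩
  rintro χ' ⟨h1', h2'⟩
  ext x
  obtain ⟨p, rfl⟩ := hf_surj x
  have hsplit : f p = (Subgroup.inclusion (le_sup_left : Z ≤ Z ⊔ G₂) p.1) *
      (Subgroup.inclusion (le_sup_right : G₂ ≤ Z ⊔ G₂) p.2) := by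
    apply Subtype.ext
    simp [f]
  rw [hsplit, _root_.map_mul, _root_.map_mul]
  have e1 : χ' (Subgroup.inclusion (le_sup_left : Z ≤ Z ⊔ G₂) p.1) = α p.1 :=
    DFunLike.congr_fun h1' p.1
  have e2 : χ' (Subgroup.inclusion (le_sup_right : G₂ ≤ Z ⊔ G₂) p.2) = β p.2 :=
    DFunLike.congr_fun h2' p.2
  have e3 : χ (Subgroup.inclusion (le_sup_left : Z ≤ Z ⊔ G₂) p.1) = α p.1 :=
    DFunLike.congr_fun hZres p.1
  have e4 : χ (Subgroup.inclusion (le_sup_right : G₂ ≤ Z ⊔ G₂) p.2) = β p.2 :=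
    DFunLike.congr_fun hGres p.2
  rw [e1, e2, e3, e4]
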